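/- Define μ₀(θ) = θ·sin(θ/2)/(2π·sin²(θ/4)) and μ₁(θ) = (π·sin(θ/2)/θ)². Both μ₀ and μ₁ are decreasing on (0, 2π), and μ₀(π) = μ₁(π) = 1; consequently μ₀(θ) ≥ 1 and μ₁(θ) ≥ 1 for 0 < θ < π, and μ₀(θ) ≤ 1 and μ₁(θ) ≤ 1 for π < θ < 2π. -/

import Mathlib

open Real Set

noncomputable def mu0 (θ : ℝ) : ℝ :=
  θ * Real.sin (θ / 2) / (2 * Real.pi * (Real.sin (θ / 4))^2)

noncomputable def mu1 (θ : ℝ) : ℝ := (Real.pi * Real.sin (θ / 2) / θ)^2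

lemma keyB {x : ℝ} (hx : 0 < x) (hx' : x < Real.pi) :
    x * Real.cos x < Real.sin x := by
  have hs : 0 < Real.sin x := Real.sin_pos_of_pos_of_lt_pi hx hx'
  rcases le_or_gt (Real.cos x) 0 with h | h
  · nlinarith
  · have hlt : x < Real.pi / 2 := by
      by_contra hge
      push_neg at hge
      have := Real.cos_nonpos_of_pi_div_two_le_of_le hge (by linarith [Real.pi_pos])
      linarith
    have htan := Real.lt_tan hx hlt
    rw [Real.tan_eq_sin_div_cos] at htan
    exact (lt_div_iff₀ h).mp htan

-- f θ = sin(θ/2)/θ is strictly decreasing on (0, 2π)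
lemma f_strictAnti :
    StrictAntiOn (fun θ : ℝ => Real.sin (θ / 2) / θ) (Set.Ioo 0 (2 * Real.pi)) := by
  apply strictAntiOn_of_deriv_neg (convex_Ioo _ _)
  · exact ((Real.continuous_sin.comp (continuous_id.div_const 2)).continuousOn).div
      continuousOn_id (fun x hx => ne_of_gt hx.1)
  · intro x hx
    rw [interior_Ioo] at hx
    obtain ⟨hx0, hx2⟩ := hx
    have hd1 : HasDerivAt (fun t : ℝ => Real.sin (t / 2)) (Real.cos (x / 2) * (1 / 2)) x :=
      by have := (Real.hasDerivAt_sin (x / 2)).comp x ((hasDerivAt_id x).div_const 2); exact this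
    have hd : HasDerivAt (fun t : ℝ => Real.sin (t / 2) / t)
        ((Real.cos (x / 2) * (1 / 2) * x - Real.sin (x / 2) * 1) / x ^ 2) x :=
      hd1.div (hasDerivAt_id x) (ne_of_gt hx0)
    rw [hd.deriv]
    have hkey : (x / 2) * Real.cos (x / 2) < Real.sin (x / 2) :=
      keyB (by linarith) (by linarith)
    apply div_neg_of_neg_of_pos
    · nlinarith
    · positivity

-- h θ = θ cos(θ/4)/sin(θ/4) is strictly decreasing on (0, 2π)
lemma h_strictAnti :
    StrictAntiOn (fun θ : ℝ => θ * Real.cos (θ / 4) / Real.sin (θ / 4))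
      (Set.Ioo 0 (2 * Real.pi)) := by
  have hsin : ∀ x ∈ Set.Ioo (0:ℝ) (2 * Real.pi), 0 < Real.sin (x / 4) := by
    intro x hx
    exact Real.sin_pos_of_pos_of_lt_pi (by linarith [hx.1]) (by nlinarith [hx.2, Real.pi_pos])
  apply strictAntiOn_of_deriv_neg (convex_Ioo _ _)
  · exact ((continuous_id.mul (Real.continuous_cos.comp (continuous_id.div_const 4))).continuousOn).div
      ((Real.continuous_sin.comp (continuous_id.div_const 4)).continuousOn)
      (fun x hx => ne_of_gt (hsin x hx))
  · intro x hx
    rw [interior_Ioo] at hx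
    obtain ⟨hx0, hx2⟩ := hx
    have hs4 : 0 < Real.sin (x / 4) := hsin x ⟨hx0, hx2⟩
    have hdc : HasDerivAt (fun t : ℝ => Real.cos (t / 4)) (-Real.sin (x / 4) * (1 / 4)) x :=
      by have := (Real.hasDerivAt_cos (x / 4)).comp x ((hasDerivAt_id x).div_const 4); exact this
    have hdn : HasDerivAt (fun t : ℝ => t * Real.cos (t / 4))
        (1 * Real.cos (x / 4) + x * (-Real.sin (x / 4) * (1 / 4))) x :=
      (hasDerivAt_id x).mul hdc
    have hds : HasDerivAt (fun t : ℝ => Real.sin (t / 4)) (Real.cos (x / 4) * (1 / 4)) x :=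
      by have := (Real.hasDerivAt_sin (x / 4)).comp x ((hasDerivAt_id x).div_const 4); exact this
    have hd : HasDerivAt (fun t : ℝ => t * Real.cos (t / 4) / Real.sin (t / 4))
        (((1 * Real.cos (x / 4) + x * (-Real.sin (x / 4) * (1 / 4))) * Real.sin (x / 4)
          - x * Real.cos (x / 4) * (Real.cos (x / 4) * (1 / 4))) / Real.sin (x / 4) ^ 2) x :=
      hdn.div hds (ne_of_gt hs4)
    rw [hd.deriv]
    apply div_neg_of_neg_of_pos
    · have hsc : Real.sin (x / 4) * Real.cos (x / 4) = Real.sin (x / 2) / 2 := by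
        rw [show x / 2 = 2 * (x / 4) by ring, Real.sin_two_mul]; ring
      have hsl : Real.sin (x / 2) < x / 2 := Real.sin_lt (by linarith)
      have hpyth := Real.sin_sq_add_cos_sq (x / 4)
      nlinarith
    · positivity

theorem stmt14 :
    AntitoneOn mu0 (Set.Ioo 0 (2 * Real.pi)) ∧
    AntitoneOn mu1 (Set.Ioo 0 (2 * Real.pi)) ∧
    mu0 Real.pi = 1 ∧ mu1 Real.pi = 1 ∧
    (∀ θ : ℝ, 0 < θ → θ < Real.pi → 1 ≤ mu0 θ ∧ 1 ≤ mu1 θ) ∧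
    (∀ θ : ℝ, Real.pi < θ → θ < 2 * Real.pi → mu0 θ ≤ 1 ∧ mu1 θ ≤ 1) := by
  have hπ := Real.pi_pos
  have hsin4 : ∀ x ∈ Set.Ioo (0:ℝ) (2 * Real.pi), 0 < Real.sin (x / 4) := by
    intro x hx
    exact Real.sin_pos_of_pos_of_lt_pi (by linarith [hx.1]) (by nlinarith [hx.2])
  have hsin2 : ∀ x ∈ Set.Ioo (0:ℝ) (2 * Real.pi), 0 < Real.sin (x / 2) := by
    intro x hx
    exact Real.sin_pos_of_pos_of_lt_pi (by linarith [hx.1]) (by linarith [hx.2])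
  -- mu0 equals h/π on the set
  have hEq : ∀ x ∈ Set.Ioo (0:ℝ) (2 * Real.pi),
      mu0 x = (x * Real.cos (x / 4) / Real.sin (x / 4)) / Real.pi := by
    intro x hx
    have hs := hsin4 x hx
    have h2 : Real.sin (x / 2) = 2 * Real.sin (x / 4) * Real.cos (x / 4) := by
      rw [show x / 2 = 2 * (x / 4) by ring, Real.sin_two_mul]
    unfold mu0
    rw [h2]
    field_simp
  have hmu0 : AntitoneOn mu0 (Set.Ioo 0 (2 * Real.pi)) := by
    intro a ha b hb hab
    rw [hEq a ha, hEq b hb]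
    rcases eq_or_lt_of_le hab with rfl | hlt
    · exact le_refl _
    · exact div_le_div_of_nonneg_right (le_of_lt (h_strictAnti ha hb hlt)) hπ.le
  have hmu1 : AntitoneOn mu1 (Set.Ioo 0 (2 * Real.pi)) := by
    intro a ha b hb hab
    have hfb : (0:ℝ) ≤ Real.sin (b / 2) / b :=
      le_of_lt (div_pos (hsin2 b hb) hb.1)
    have hf : Real.sin (b / 2) / b ≤ Real.sin (a / 2) / a := by
      rcases eq_or_lt_of_le hab with rfl | hlt
      · exact le_refl _
      · exact le_of_lt (f_strictAnti ha hb hlt)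
    unfold mu1
    have e1 : Real.pi * Real.sin (a / 2) / a = Real.pi * (Real.sin (a / 2) / a) := by ring
    have e2 : Real.pi * Real.sin (b / 2) / b = Real.pi * (Real.sin (b / 2) / b) := by ring
    rw [e1, e2]
    apply pow_le_pow_left₀ (by positivity)
    exact mul_le_mul_of_nonneg_left hf (le_of_lt hπ)
  have hv0 : mu0 Real.pi = 1 := by
    unfold mu0
    rw [Real.sin_pi_div_two, Real.sin_pi_div_four]
    have : (Real.sqrt 2 / 2) ^ 2 = 1 / 2 := by
      rw [div_pow, Real.sq_sqrt (by norm_num : (0:ℝ) ≤ 2)] <;> norm_num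
    rw [this]
    field_simp
  have hv1 : mu1 Real.pi = 1 := by
    unfold mu1
    rw [Real.sin_pi_div_two]
    rw [mul_one, div_self (ne_of_gt hπ)]
    norm_num
  have hπmem : Real.pi ∈ Set.Ioo (0:ℝ) (2 * Real.pi) := ⟨hπ, by linarith⟩
  refine ⟨hmu0, hmu1, hv0, hv1, ?_, ?_⟩
  · intro θ h0 h1
    have hmem : θ ∈ Set.Ioo (0:ℝ) (2 * Real.pi) := ⟨h0, by linarith⟩
    constructor
    · have := hmu0 hmem hπmem (le_of_lt h1); rw [hv0] at this; exact this
    · have := hmu1 hmem hπmem (le_of_lt h1); rw [hv1] at this; exact this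
  · intro θ h0 h1
    have hmem : θ ∈ Set.Ioo (0:ℝ) (2 * Real.pi) := ⟨by linarith, h1⟩
    constructor
    · have := hmu0 hπmem hmem (le_of_lt h0); rw [hv0] at this; exact this
    · have := hmu1 hπmem hmem (le_of_lt h0); rw [hv1] at this; exact this
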